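/- There exists a constant C > 0 such that for every even positive integer d: |(1/d) ∑_{j=1}^{d/2} 4^{−j} · (2j choose j) − √(2/(π d))| ≤ C/d. In other words, (1/d) ∑_{j=1}^{d/2} 2^{−2j} binom(2j, j) = √(2/(π d)) + O(1/d). -/

import Mathlib

open Matrix Kronecker BigOperators ComplexOrder

noncomputable def traceNorm {n : Type*} [Fintype n] [DecidableEq n] (A : Matrix n n ℂ) : ℝ :=
  (((Matrix.posSemidef_conjTranspose_mul_self A).1.eigenvectorUnitary : Matrix n n ℂ) *
    Matrix.diagonal (((↑) : ℝ → ℂ) ∘ (Real.sqrt ·) ∘ (Matrix.posSemidef_conjTranspose_mul_self A).1.eigenvalues) *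
    (star ((Matrix.posSemidef_conjTranspose_mul_self A).1.eigenvectorUnitary : Matrix n n ℂ))).trace.re

def IsDensity {n : Type*} [Fintype n] (ρ : Matrix n n ℂ) : Prop :=
  ρ.PosSemidef ∧ ρ.trace = 1

def tensorId {X Y Z : Type*} (Φ : Matrix X X ℂ → Matrix Y Y ℂ)
    (ρ : Matrix (X × Z) (X × Z) ℂ) : Matrix (Y × Z) (Y × Z) ℂ :=
  Matrix.of fun p q => Φ (Matrix.of fun x x' => ρ (x, p.2) (x', q.2)) p.1 q.1

noncomputable def ChoiMatrix {X Y : Type*} [Fintype X] [DecidableEq X] [Fintype Y]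
    (Φ : Matrix X X ℂ → Matrix Y Y ℂ) : Matrix (Y × X) (Y × X) ℂ :=
  ∑ j : X, ∑ k : X, (Φ (Matrix.single j k 1)) ⊗ₖ (Matrix.single j k 1)

def IsChannel {X Y : Type*} [Fintype X] [DecidableEq X] [Fintype Y]
    (Φ : Matrix X X ℂ →ₗ[ℂ] Matrix Y Y ℂ) : Prop :=
  (∀ M, (Φ M).trace = M.trace) ∧ (ChoiMatrix (⇑Φ)).PosSemidef

def SeparableOp {Y Z : Type*} [Fintype Y] [Fintype Z]
    (P : Matrix (Y × Z) (Y × Z) ℂ) : Prop :=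
  ∃ (N : ℕ) (Q : Fin N → Matrix Y Y ℂ) (R : Fin N → Matrix Z Z ℂ),
    (∀ i, (Q i).PosSemidef) ∧ (∀ i, (R i).PosSemidef) ∧ P = ∑ i, Q i ⊗ₖ R i

def partialTranspose {Y Z : Type*} (M : Matrix (Y × Z) (Y × Z) ℂ) :
    Matrix (Y × Z) (Y × Z) ℂ :=
  Matrix.of fun p q => M (p.1, q.2) (q.1, p.2)

def IsPPT {Y Z : Type*} [Fintype Y] [Fintype Z] (M : Matrix (Y × Z) (Y × Z) ℂ) : Prop :=
  M.PosSemidef ∧ (partialTranspose M).PosSemidef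

section CentralBinomHelpers
open Real

noncomputable def cbr (n : ℕ) : ℝ := (Nat.centralBinom n : ℝ) / 4 ^ n

lemma cbr_pos (n : ℕ) : 0 < cbr n := by
  have h := Nat.centralBinom_pos n
  unfold cbr
  positivity

lemma cbr_zero : cbr 0 = 1 := by simp [cbr, Nat.centralBinom]

lemma cbr_succ (n : ℕ) : (2*(n:ℝ)+2) * cbr (n+1) = (2*(n:ℝ)+1) * cbr n := by
  have h : ((n:ℝ)+1) * Nat.centralBinom (n+1) = 2*(2*(n:ℝ)+1) * Nat.centralBinom n := by
    exact_mod_cast Nat.succ_mul_centralBinom_succ n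
  unfold cbr
  have h4 : (4:ℝ)^n ≠ 0 := by positivity
  field_simp
  ring_nf
  ring_nf at h
  linear_combination (2 * (4:ℝ)^n) * h

lemma sum_cbr (n : ℕ) : ∑ j ∈ Finset.Icc 1 n, cbr j = (2*(n:ℝ)+1) * cbr n - 1 := by
  induction n with
  | zero => simp [cbr_zero]
  | succ n ih =>
    rw [Finset.sum_Icc_succ_top (by omega : 1 ≤ n + 1), ih]
    have h := cbr_succ n
    push_cast
    linarith

lemma cbr_le_one (n : ℕ) : cbr n ≤ 1 := by
  induction n with
  | zero => simp [cbr_zero]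
  | succ n ih =>
    have h := cbr_succ n
    have h1 := cbr_pos n
    have h2 := cbr_pos (n+1)
    nlinarith [Nat.cast_nonneg (α := ℝ) n]

lemma cbr_sq (n : ℕ) : cbr n ^ 2 * ((2*(n:ℝ)+1) * Real.Wallis.W n) = 1 := by
  have h : (Nat.centralBinom n : ℝ) * (n.factorial : ℝ) * (n.factorial : ℝ) = ((2*n).factorial : ℝ) := by
    have h0 := Nat.choose_mul_factorial_mul_factorial (show n ≤ 2*n by omega)
    rw [show 2*n - n = n by omega] at h0
    exact_mod_cast h0
  have h2 : ((Nat.centralBinom n : ℝ))^2 * ((n.factorial : ℝ))^4 = (((2*n).factorial : ℝ))^2 := by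
    linear_combination ((Nat.centralBinom n : ℝ) * (n.factorial : ℝ) * (n.factorial : ℝ) + ((2*n).factorial : ℝ)) * h
  rw [Real.Wallis.W_eq_factorial_ratio]
  unfold cbr
  have hp : (2:ℝ)^(4*n) = ((4:ℝ)^n)^2 := by
    rw [show (4:ℝ) = 2^2 by norm_num, ← pow_mul, ← pow_mul]; ring_nf
  have hf : (((2*n).factorial : ℝ)) ≠ 0 := by positivity
  have h4 : (4:ℝ)^n ≠ 0 := by positivity
  have hn : (2*(n:ℝ)+1) ≠ 0 := by positivity
  field_simp
  rw [hp]
  linear_combination (4:ℝ)^(n*2) * h2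

lemma cbr_sq_le (n : ℕ) (hn : 1 ≤ n) : cbr n ^ 2 ≤ 1 / (π * n) := by
  have hW := Real.Wallis.le_W n
  have hsq := cbr_sq n
  have hWpos := Real.Wallis.W_pos n
  have hπ := Real.pi_gt_three
  have hn1 : (1:ℝ) ≤ n := by exact_mod_cast hn
  rw [le_div_iff₀ (by positivity)]
  have hW' : π * n ≤ (2*(n:ℝ)+1) * Real.Wallis.W n := by
    have h1 := mul_le_mul_of_nonneg_right hW (by positivity : (0:ℝ) ≤ 2*(n:ℝ)+1)
    rw [div_mul_eq_mul_div, div_mul_eq_mul_div, div_le_iff₀ (by positivity)] at h1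
    nlinarith
  nlinarith [mul_le_mul_of_nonneg_left hW' (sq_nonneg (cbr n))]

lemma le_cbr_sq (n : ℕ) : 2 / ((2*(n:ℝ)+1) * π) ≤ cbr n ^ 2 := by
  have hW := Real.Wallis.W_le n
  have hsq := cbr_sq n
  have hWpos := Real.Wallis.W_pos n
  have hπ := Real.pi_gt_three
  rw [div_le_iff₀ (by positivity)]
  nlinarith [mul_le_mul_of_nonneg_left hW (sq_nonneg (cbr n))]

lemma sqrt_diff_le (n : ℕ) (hn : 1 ≤ n) :
    Real.sqrt (1/(π*n)) ≤ Real.sqrt (2/((2*(n:ℝ)+1)*π)) + 1/(4*(n:ℝ)) := by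
  set b := Real.sqrt (2/((2*(n:ℝ)+1)*π)) with hbdef
  have hn1 : (1:ℝ) ≤ n := by exact_mod_cast hn
  have hπ := Real.pi_gt_three
  have hbnn : 0 ≤ b := Real.sqrt_nonneg _
  have hb2 : b^2 = 2/((2*(n:ℝ)+1)*π) := Real.sq_sqrt (by positivity)
  have hb2' : b^2 * ((2*(n:ℝ)+1)*π) = 2 := by
    rw [hb2]; field_simp
  have hb1 : b^2 ≤ 1 := by
    rw [hb2, div_le_one (by positivity)]; nlinarith
  have hble : b ≤ 1 := by nlinarith [hb1]
  set t : ℝ := 1/(4*(n:ℝ)) with htdef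
  have htnn : 0 ≤ t := by positivity
  have ht : t * (4*(n:ℝ)) = 1 := by rw [htdef]; field_simp
  have key : 1/(π*(n:ℝ)) ≤ (b + t)^2 := by
    rw [div_le_iff₀ (by positivity)]
    have h3 : b*π*(t*(4*(n:ℝ))) = b*π := by rw [ht, mul_one]
    nlinarith [mul_nonneg (mul_nonneg Real.pi_pos.le hbnn) (sub_nonneg.2 hble),
      mul_nonneg (mul_nonneg Real.pi_pos.le (by linarith : (0:ℝ) ≤ (n:ℝ))) (sq_nonneg t)]
  have := Real.sqrt_le_sqrt key
  rwa [Real.sqrt_sq (by positivity)] at this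
end CentralBinomHelpers

/-- `(1/d) ∑_{j=1}^{d/2} 2^{-2j} (2j choose j) = √(2/(π d)) + O(1/d)`
for even positive integers `d`. -/
theorem central_binomial_sum_asymptotic :
    ∃ C : ℝ, 0 < C ∧ ∀ d : ℕ, 0 < d → Even d →
      |(1 / (d : ℝ)) * ∑ j ∈ Finset.Icc 1 (d / 2), ((Nat.choose (2 * j) j : ℝ) / 4 ^ j)
          - Real.sqrt (2 / (Real.pi * d))| ≤ C / d := by
  refine ⟨2, by norm_num, ?_⟩
  intro d hd hev
  obtain ⟨n, rfl⟩ : ∃ n, d = 2 * n := by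
    obtain ⟨r, hr⟩ := hev; exact ⟨r, by omega⟩
  have hn : 1 ≤ n := by omega
  have hn1 : (1:ℝ) ≤ (n:ℝ) := by exact_mod_cast hn
  have hNpos : (0:ℝ) < (n:ℝ) := by linarith
  have hpi := Real.pi_gt_three
  rw [show 2 * n / 2 = n by omega]
  have hsum : ∑ j ∈ Finset.Icc 1 n, ((Nat.choose (2 * j) j : ℝ) / 4 ^ j)
      = (2*(n:ℝ)+1) * cbr n - 1 := by
    rw [← sum_cbr]
    exact Finset.sum_congr rfl fun j _ => rfl
  have hsqrt : Real.sqrt (2 / (Real.pi * ((2*n : ℕ) : ℝ))) = Real.sqrt (1/(Real.pi*(n:ℝ))) := by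
    congr 1
    push_cast
    field_simp
  rw [hsum, hsqrt]
  set c := cbr n with hc
  set a := Real.sqrt (1/(Real.pi*(n:ℝ))) with ha
  set b := Real.sqrt (2/((2*(n:ℝ)+1)*Real.pi)) with hb
  have hcpos := cbr_pos n
  have hc1 := cbr_le_one n
  have hca : c ≤ a := by
    rw [hc, ha, show cbr n = Real.sqrt (cbr n ^ 2) from (Real.sqrt_sq hcpos.le).symm]
    exact Real.sqrt_le_sqrt (cbr_sq_le n hn)
  have hbc : b ≤ c := by
    rw [hb, hc, show cbr n = Real.sqrt (cbr n ^ 2) from (Real.sqrt_sq hcpos.le).symm]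
    exact Real.sqrt_le_sqrt (le_cbr_sq n)
  have hab : a ≤ b + 1/(4*(n:ℝ)) := sqrt_diff_le n hn
  have hcast : ((2*n : ℕ) : ℝ) = 2*(n:ℝ) := by push_cast; ring
  rw [hcast]
  have expand : 1/(2*(n:ℝ)) * ((2*(n:ℝ)+1)*c - 1) - a = (c - a) + (c - 1)/(2*(n:ℝ)) := by
    field_simp
    ring
  rw [expand, abs_le]
  have h4 : (0:ℝ) < 1/(4*(n:ℝ)) := by positivity
  have e2 : (2:ℝ)/(2*(n:ℝ)) = 1/(4*(n:ℝ)) + 1/(2*(n:ℝ)) + 1/(4*(n:ℝ)) := by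
    field_simp; ring
  have h5 : (c - 1)/(2*(n:ℝ)) ≤ 0 := by
    rw [div_eq_mul_inv]
    exact mul_nonpos_of_nonpos_of_nonneg (by linarith) (by positivity)
  have h6 : -(1/(2*(n:ℝ))) ≤ (c - 1)/(2*(n:ℝ)) := by
    rw [← neg_div]
    gcongr
    linarith
  constructor
  · linarith
  · linarith
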